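/- Let f be a mechanism satisfying egalitarian-equivalence, efficiency, individual rationality, and no subsidy, and let v be a valuation profile not in Ṽ (i.e., the (m+1)-th through n-th highest valuations are not all equal). Then f(v) is a pay-as-bid allocation: the object allocation maximizes Σ v_i·x_i, winners pay their own valuation, and losers pay nothing. -/

import Mathlib

open scoped NNReal
open Finset

noncomputable section

/-- The `k`-th highest valuation (1-indexed); junk value `0` if `k` is out of range. -/
def vk (n k : ℕ) (v : Fin n → ℝ≥0) : ℝ≥0 :=
  if h : 0 < k ∧ k ≤ n then v (Tuple.sort v ⟨n - k, by omega⟩) else 0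

/-- `v ∈ Ṽ` : the `(m+1)`-th through `n`-th highest valuations are all equal. -/
def tilde (n m : ℕ) (v : Fin n → ℝ≥0) : Prop :=
  ∀ k, m + 1 ≤ k → k ≤ n → vk n k v = vk n (m + 1) v

/-- A mechanism: object assignment and transfers, allocating at most `m` objects. -/
structure Mechanism (n m : ℕ) where
  x : (Fin n → ℝ≥0) → Fin n → Bool
  t : (Fin n → ℝ≥0) → Fin n → ℝ
  feasible : ∀ v, (Finset.univ.filter fun i => x v i = true).card ≤ m

/-- Quasi-linear utility of a bundle `(x, t)` for valuation `w`. -/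
def util (z : Bool × ℝ) (w : ℝ≥0) : ℝ := (if z.1 then (w : ℝ) else 0) - z.2

def Mechanism.bundle {n m : ℕ} (f : Mechanism n m) (v : Fin n → ℝ≥0) (i : Fin n) :
    Bool × ℝ := (f.x v i, f.t v i)

def IR {n m : ℕ} (f : Mechanism n m) : Prop :=
  ∀ v i, 0 ≤ util (f.bundle v i) (v i)

def NoSubsidy {n m : ℕ} (f : Mechanism n m) : Prop :=
  ∀ v i, 0 ≤ f.t v i

def StrategyProof {n m : ℕ} (f : Mechanism n m) : Prop :=
  ∀ v (i : Fin n) (w : ℝ≥0),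
    util (f.bundle (Function.update v i w) i) (v i) ≤ util (f.bundle v i) (v i)

def EgalitarianEquivalent {n m : ℕ} (f : Mechanism n m) : Prop :=
  ∀ v, ∃ z₀ : Bool × ℝ, ∀ i, util (f.bundle v i) (v i) = util z₀ (v i)

def EnvyFree {n m : ℕ} (f : Mechanism n m) : Prop :=
  ∀ v i j, util (f.bundle v j) (v i) ≤ util (f.bundle v i) (v i)

/-- `x` maximizes total valuation among feasible object allocations. -/
def EffAlloc (n m : ℕ) (v : Fin n → ℝ≥0) (x : Fin n → Bool) : Prop :=
  ∀ y : Fin n → Bool, (Finset.univ.filter fun i => y i = true).card ≤ m →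
    (∑ i, if y i then (v i : ℝ) else 0) ≤ ∑ i, if x i then (v i : ℝ) else 0

def Efficient {n m : ℕ} (f : Mechanism n m) : Prop :=
  ∀ v, EffAlloc n m v (f.x v)

/-- Non-obvious manipulability: no report improves the sup or the inf (over others'
valuations) of an agent's utility compared to truth-telling. -/
def NOM {n m : ℕ} (f : Mechanism n m) : Prop :=
  ∀ (i : Fin n) (vi vi' : ℝ≥0),
    (⨆ w : Fin n → ℝ≥0, util (f.bundle (Function.update w i vi') i) vi) ≤
      (⨆ w : Fin n → ℝ≥0, util (f.bundle (Function.update w i vi) i) vi) ∧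
    (⨅ w : Fin n → ℝ≥0, util (f.bundle (Function.update w i vi') i) vi) ≤
      (⨅ w : Fin n → ℝ≥0, util (f.bundle (Function.update w i vi) i) vi)

/-- Winner selection function. -/
structure WSF (n m : ℕ) where
  τ : (Fin n → ℝ≥0) → Finset (Fin n)
  empty_of_not_tilde : ∀ v, ¬ tilde n m v → τ v = ∅
  mem_le : ∀ v i, i ∈ τ v → vk n (m + 1) v ≤ v i
  mem_of_lt : ∀ v, τ v ≠ ∅ → ∀ i, vk n (m + 1) v < v i → i ∈ τ v
  card_le : ∀ v, (τ v).card ≤ m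

def Uncompromising {n m : ℕ} (T : WSF n m) : Prop :=
  ∀ v (i : Fin n) (w : ℝ≥0), i ∈ T.τ v → vk n (m + 1) v < w →
    i ∈ T.τ (Function.update v i w)

/-- `f` is the `τ`-Vickrey mechanism combined with the no-trade. -/
def IsTauVickrey {n m : ℕ} (f : Mechanism n m) (T : WSF n m) : Prop :=
  ∀ v i, (f.x v i = true ↔ i ∈ T.τ v) ∧
    f.t v i = if i ∈ T.τ v then (vk n (m + 1) v : ℝ) else 0

/-- An efficient-Vickrey allocation at `v`: efficient object allocation, winners pay
the `(m+1)`-th highest valuation, losers pay nothing. -/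
def IsEVAlloc (n m : ℕ) (v : Fin n → ℝ≥0) (z : Fin n → Bool × ℝ) : Prop :=
  (Finset.univ.filter fun i => (z i).1 = true).card ≤ m ∧
  EffAlloc n m v (fun i => (z i).1) ∧
  ∀ i, (z i).2 = if (z i).1 then (vk n (m + 1) v : ℝ) else 0

/-- A pay-as-bid allocation at `v`: efficient object allocation, winners pay their
own valuation, losers pay nothing. -/
def IsPABAlloc (n m : ℕ) (v : Fin n → ℝ≥0) (z : Fin n → Bool × ℝ) : Prop :=
  (Finset.univ.filter fun i => (z i).1 = true).card ≤ m ∧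
  EffAlloc n m v (fun i => (z i).1) ∧
  ∀ i, (z i).2 = if (z i).1 then (v i : ℝ) else 0

/-- The Vickrey mechanism: winners are exactly the agents with `v i > v^{m+1}`,
winners pay `v^{m+1}`, losers get and pay nothing. -/
def IsVickrey {n m : ℕ} (f : Mechanism n m) : Prop :=
  ∀ v i, (f.x v i = true ↔ vk n (m + 1) v < v i) ∧
    f.t v i = if f.x v i then (vk n (m + 1) v : ℝ) else 0

/-- The efficient Vickrey mechanism combined with a pay-as-bid. -/
def IsEVPAB {n m : ℕ} (f : Mechanism n m) : Prop :=
  ∀ v, (tilde n m v → IsEVAlloc n m v (f.bundle v)) ∧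
    (¬ tilde n m v → IsPABAlloc n m v (f.bundle v))

/-- The class `F` of mechanisms. -/
def MemF {n m : ℕ} (f : Mechanism n m) : Prop :=
  EgalitarianEquivalent f ∧ NOM f ∧ Efficient f ∧ IR f ∧ NoSubsidy f

-- loser ≤ winner
lemma loser_le_winner {n m : ℕ} {v : Fin n → ℝ≥0} {x : Fin n → Bool}
    (heff : EffAlloc n m v x)
    (hcard : (Finset.univ.filter fun i => x i = true).card ≤ m)
    {i j : Fin n} (hi : x i = true) (hj : x j = false) : v j ≤ v i := by
  have hij : i ≠ j := by intro h; rw [h, hj] at hi; simp at hi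
  set y : Fin n → Bool := fun k => if k = i then false else if k = j then true else x k with hy
  have hset : (Finset.univ.filter fun k => y k = true)
      = insert j ((Finset.univ.filter fun k => x k = true).erase i) := by
    ext k
    simp only [Finset.mem_insert, Finset.mem_erase, Finset.mem_filter, Finset.mem_univ,
      true_and, hy]
    by_cases h1 : k = i
    · subst h1; simp [hij.symm, hij]
    · by_cases h2 : k = j
      · subst h2; simp [h1]
      · simp [h1, h2]
  have hiy : i ∈ (Finset.univ.filter fun k => x k = true) := by simp [hi]
  have hycard : (Finset.univ.filter fun k => y k = true).card ≤ m := by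
    rw [hset]
    calc (insert j ((Finset.univ.filter fun k => x k = true).erase i)).card
        ≤ ((Finset.univ.filter fun k => x k = true).erase i).card + 1 :=
          Finset.card_insert_le _ _
      _ = (Finset.univ.filter fun k => x k = true).card - 1 + 1 := by
          rw [Finset.card_erase_of_mem hiy]
      _ ≤ m := by
          have := Finset.card_pos.mpr ⟨i, hiy⟩
          omega
  have hle := heff y hycard
  set F : Fin n → ℝ := fun k => if x k then (v k : ℝ) else 0 with hF
  set G : Fin n → ℝ := fun k => if y k then (v k : ℝ) else 0 with hG
  have hdiff : ∑ k, (G k - F k) = ∑ k ∈ ({i, j} : Finset (Fin n)), (G k - F k) := by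
    refine (Finset.sum_subset (Finset.subset_univ _) ?_).symm
    intro k _ hk
    simp only [Finset.mem_insert, Finset.mem_singleton, not_or] at hk
    simp [hG, hF, hy, hk.1, hk.2]
  have hpair : ∑ k ∈ ({i, j} : Finset (Fin n)), (G k - F k) = (v j : ℝ) - v i := by
    rw [Finset.sum_pair hij]
    simp [hG, hF, hy, hi, hj, hij.symm]
    ring
  have : ∑ k, (G k - F k) ≤ 0 := by
    rw [Finset.sum_sub_distrib]; linarith
  rw [hdiff, hpair] at this
  have : (v j : ℝ) ≤ v i := by linarith
  exact_mod_cast this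

lemma tilde_of_aux {n m : ℕ} (hmn : m < n) (v : Fin n → ℝ≥0) (c : ℝ≥0)
    (hge : ∀ i, c ≤ v i)
    (hcard : n - m ≤ (Finset.univ.filter fun i => v i ≤ c).card) :
    tilde n m v := by
  set g := Tuple.sort v with hg
  have hmono : Monotone (v ∘ g) := Tuple.monotone_sort v
  have key : v (g ⟨n - (m + 1), by omega⟩) ≤ c := by
    by_contra h
    push_neg at h
    -- every sorted index ≥ n - (m+1) has value > c
    have himg : (Finset.univ.filter fun i => v i ≤ c)
        = (Finset.univ.filter fun j => v (g j) ≤ c).image g := by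
      ext i
      simp only [Finset.mem_image, Finset.mem_filter, Finset.mem_univ, true_and]
      constructor
      · intro hi; exact ⟨g.symm i, by simpa using hi, by simp⟩
      · rintro ⟨j, hj, rfl⟩; exact hj
    have hsub : (Finset.univ.filter fun j => v (g j) ≤ c)
        ⊆ Finset.univ.filter fun j : Fin n => (j : ℕ) < n - (m + 1) := by
      intro j hj
      simp only [Finset.mem_filter, Finset.mem_univ, true_and] at hj ⊢
      by_contra hlt
      push_neg at hlt
      have : v (g ⟨n - (m + 1), by omega⟩) ≤ v (g j) := hmono (by exact hlt)
      exact absurd (le_trans this hj) (not_le.mpr h)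
    have h1 : (Finset.univ.filter fun j : Fin n => (j : ℕ) < n - (m + 1)).card ≤ n - (m + 1) := by
      have : (Finset.univ.filter fun j : Fin n => (j : ℕ) < n - (m + 1)).card
          ≤ (Finset.range (n - (m + 1))).card := by
        refine Finset.card_le_card_of_injOn (fun j => (j : ℕ)) ?_ ?_
        · intro j hj
          simpa using hj
        · intro a _ b _ hab; exact Fin.ext hab
      simpa using this
    have h2 : (Finset.univ.filter fun i => v i ≤ c).card ≤ n - (m + 1) := by
      rw [himg, Finset.card_image_of_injective _ g.injective]
      exact le_trans (Finset.card_le_card hsub) h1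
    omega
  intro k hk1 hk2
  have hk0 : 0 < k ∧ k ≤ n := ⟨by omega, hk2⟩
  have hm0 : 0 < m + 1 ∧ m + 1 ≤ n := ⟨by omega, by omega⟩
  unfold vk
  rw [dif_pos hk0, dif_pos hm0]
  refine le_antisymm ?_ ?_
  · exact hmono (show (⟨n - k, by omega⟩ : Fin n) ≤ ⟨n - (m + 1), by omega⟩ by
      simp [Fin.le_def]; omega)
  · exact le_trans key (hge _)

theorem stmt15 (n m : ℕ) (hmn : m < n) (f : Mechanism n m)
    (hEE : EgalitarianEquivalent f) (hEff : Efficient f)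
    (hIR : IR f) (hNS : NoSubsidy f)
    (v : Fin n → ℝ≥0) (hv : ¬ tilde n m v) :
    IsPABAlloc n m v (f.bundle v) := by
  obtain ⟨z₀, hz⟩ := hEE v
  obtain ⟨b₀, t₀⟩ := z₀
  have hfeas := f.feasible v
  have heff := hEff v
  -- losers pay 0
  have hloser0 : ∀ i, f.x v i = false → f.t v i = 0 := by
    intro i hi
    have h1 := hIR v i
    have h2 := hNS v i
    simp only [util, Mechanism.bundle, hi] at h1
    simp at h1
    linarith
  -- there is a loser
  obtain ⟨j₀, hj₀⟩ : ∃ j, f.x v j = false := by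
    by_contra h
    push_neg at h
    have : (Finset.univ.filter fun i => f.x v i = true) = Finset.univ := by
      ext i; simp only [Finset.mem_filter, Finset.mem_univ, true_and, iff_true]
      cases hxi : f.x v i
      · exact absurd hxi (h i)
      · rfl
    rw [this] at hfeas
    simp at hfeas
    omega
  refine ⟨hfeas, heff, ?_⟩
  cases b₀ with
  | false =>
    -- util z₀ w = -t₀ ; loser j₀ has util 0
    have hj := hz j₀
    simp only [util, Mechanism.bundle, hj₀, hloser0 j₀ hj₀] at hj
    simp at hj
    intro i
    simp only [Mechanism.bundle]
    by_cases hxi : f.x v i = true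
    · simp only [hxi, ↓reduceIte]
      have hi := hz i
      simp only [util, Mechanism.bundle, hxi] at hi
      simp at hi
      linarith
    · have hxi' : f.x v i = false := by simpa using hxi
      simp only [hxi', Bool.false_eq_true, ↓reduceIte]
      exact hloser0 i hxi' 
  | true =>
    -- every loser has valuation t₀ ; derive tilde, contradiction
    exfalso
    apply hv
    set c : ℝ≥0 := v j₀ with hc
    have hlv : ∀ i, f.x v i = false → v i = c := by
      intro i hi
      have h1 := hz i
      have h2 := hz j₀
      simp only [util, Mechanism.bundle, hi, hj₀, hloser0 i hi, hloser0 j₀ hj₀] at h1 h2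
      simp at h1 h2
      have : (v i : ℝ) = v j₀ := by linarith
      exact_mod_cast this
    have hge : ∀ i, c ≤ v i := by
      intro i
      cases hxi : f.x v i
      · exact le_of_eq (hlv i hxi).symm
      · exact loser_le_winner heff hfeas hxi hj₀
    have hsub : (Finset.univ.filter fun i => f.x v i = false)
        ⊆ Finset.univ.filter fun i => v i ≤ c := by
      intro i hi
      simp only [Finset.mem_filter, Finset.mem_univ, true_and] at hi ⊢
      exact le_of_eq (hlv i hi)
    have hcardf : n - m ≤ (Finset.univ.filter fun i => v i ≤ c).card := by
      have h1 : (Finset.univ.filter fun i => f.x v i = false)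
          = (Finset.univ.filter fun i => f.x v i = true)ᶜ := by
        ext i
        simp only [Finset.mem_filter, Finset.mem_univ, true_and, Finset.mem_compl]
        cases hxi : f.x v i <;> simp
      have h2 : (Finset.univ.filter fun i => f.x v i = false).card
          = n - (Finset.univ.filter fun i => f.x v i = true).card := by
        rw [h1, Finset.card_compl]
        simp
      have h3 := Finset.card_le_card hsub
      omega
    exact tilde_of_aux hmn v c hge hcardf


end
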